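/- There are exactly 2 non-attacking tree configurations on the 4c×4r grid with exactly c trees per column and r trees per row, for all positive integers c and r. -/

import Mathlib

def ParksAdj (p q : ℕ × ℕ) : Prop :=
  p ≠ q ∧ ((p.1 : ℤ) - q.1).natAbs ≤ 1 ∧ ((p.2 : ℤ) - q.2).natAbs ≤ 1

/-- A valid (c,r)-tree configuration on the 4c×4r grid: non-attacking, c trees per
column, r trees per row. -/
def ValidConfig (c r : ℕ) (T : Finset (ℕ × ℕ)) : Prop :=
  (∀ p ∈ T, p.1 < 4 * c ∧ p.2 < 4 * r) ∧
  (∀ i < 4 * c, (T.filter (fun p => p.1 = i)).card = r) ∧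
  (∀ j < 4 * r, (T.filter (fun p => p.2 = j)).card = c) ∧
  (∀ p ∈ T, ∀ q ∈ T, ¬ ParksAdj p q)


namespace ParksAux

open Finset

def pat (c r : ℕ) (A B : ℕ → ℕ) : Finset (ℕ × ℕ) :=
  (Finset.range (2*c) ×ˢ Finset.range (2*r)).image
    (fun q => (2*q.1 + A q.2, 2*q.2 + B q.1))

lemma valid_card {c r : ℕ} {T : Finset (ℕ × ℕ)}
    (h1 : ∀ p ∈ T, p.1 < 4 * c ∧ p.2 < 4 * r)
    (h2 : ∀ i < 4 * c, (T.filter (fun p => p.1 = i)).card = r) :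
    T.card = 4 * c * r := by
  have := Finset.card_eq_sum_card_fiberwise (s := T) (t := Finset.range (4*c))
    (f := fun p => p.1) (fun p hp => Finset.mem_range.mpr (h1 p hp).1)
  rw [this, Finset.sum_congr rfl (fun i hi => h2 i (Finset.mem_range.mp hi)),
    Finset.sum_const, Finset.card_range, smul_eq_mul]

lemma stepFun {m : ℕ} (A : ℕ → ℕ) (hb : ∀ v < 2*m, A v ≤ 1)
    (hcard : ((Finset.range (2*m)).filter (fun v => A v = 1)).card = m)
    (hmono : ∀ v, v + 1 < 2*m → A v = 1 → A (v+1) = 1) :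
    ∀ v < 2*m, A v = if v < m then 0 else 1 := by
  have hup : ∀ v w, v ≤ w → w < 2*m → A v = 1 → A w = 1 := by
    intro v w hvw hw
    induction w, hvw using Nat.le_induction with
    | base => exact fun h => h
    | succ w hvw ih => intro h; exact hmono w hw (ih (by omega) h)
  have hlow : ∀ v < m, A v = 0 := by
    intro v hv
    by_contra hne
    have h1 : A v = 1 := by have := hb v (by omega); omega
    have hsub : Finset.Ico v (2*m) ⊆ (Finset.range (2*m)).filter (fun w => A w = 1) := by
      intro w hw
      rw [Finset.mem_Ico] at hw
      rw [Finset.mem_filter, Finset.mem_range]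
      exact ⟨hw.2, hup v w hw.1 hw.2 h1⟩
    have := Finset.card_le_card hsub
    rw [Nat.card_Ico, hcard] at this
    omega
  have hsub2 : (Finset.range (2*m)).filter (fun v => A v = 1) ⊆ Finset.Ico m (2*m) := by
    intro v hv
    rw [Finset.mem_filter, Finset.mem_range] at hv
    rw [Finset.mem_Ico]
    refine ⟨?_, hv.1⟩
    by_contra h
    have := hlow v (by omega)
    omega
  have heq : (Finset.range (2*m)).filter (fun v => A v = 1) = Finset.Ico m (2*m) :=
    Finset.eq_of_subset_of_card_le hsub2 (by rw [Nat.card_Ico, hcard]; omega)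
  intro v hv
  by_cases h : v < m
  · simp [h, hlow v h]
  · have : v ∈ Finset.Ico m (2*m) := by rw [Finset.mem_Ico]; omega
    rw [← heq, Finset.mem_filter] at this
    simp [h, this.2]

lemma filter_one_card {m : ℕ} {A : ℕ → ℕ} (hb : ∀ v < 2*m, A v ≤ 1)
    (hcard : ((Finset.range (2*m)).filter (fun v => A v = 1)).card = m) :
    ((Finset.range (2*m)).filter (fun v => A v = 0)).card = m := by
  have h := Finset.card_filter_add_card_filter_not
      (s := Finset.range (2*m)) (p := fun v => A v = 1)
  have he : ((Finset.range (2*m)).filter (fun v => ¬ A v = 1)) =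
      ((Finset.range (2*m)).filter (fun v => A v = 0)) := by
    apply Finset.filter_congr
    intro v hv
    have := hb v (Finset.mem_range.mp hv)
    constructor <;> intro <;> omega
  rw [he] at h
  rw [Finset.card_range] at h
  omega

lemma valid_pat (c r : ℕ) (hc : 0 < c) (hr : 0 < r) (A B : ℕ → ℕ)
    (hA : ∀ v, A v ≤ 1) (hB : ∀ u, B u ≤ 1)
    (hAcard : ((Finset.range (2*r)).filter (fun v => A v = 1)).card = r)
    (hBcard : ((Finset.range (2*c)).filter (fun u => B u = 1)).card = c)
    (hD1 : ∀ v u, ¬ (A v = 1 ∧ A (v+1) = 0 ∧ B u = 1 ∧ B (u+1) = 0))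
    (hD2 : ∀ v u, ¬ (A (v+1) = 1 ∧ A v = 0 ∧ B (u+1) = 1 ∧ B u = 0)) :
    ValidConfig c r (pat c r A B) := by
  have hAcard0 : ((Finset.range (2*r)).filter (fun v => A v = 0)).card = r :=
    filter_one_card (fun v _ => hA v) hAcard
  have hBcard0 : ((Finset.range (2*c)).filter (fun u => B u = 0)).card = c :=
    filter_one_card (fun u _ => hB u) hBcard
  have hmemiff : ∀ p : ℕ × ℕ, p ∈ pat c r A B ↔
      ∃ u v, u < 2*c ∧ v < 2*r ∧ p = (2*u + A v, 2*v + B u) := by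
    intro p
    simp only [pat, Finset.mem_image, Finset.mem_product, Finset.mem_range, Prod.exists]
    constructor
    · rintro ⟨u, v, ⟨hu, hv⟩, rfl⟩; exact ⟨u, v, hu, hv, rfl⟩
    · rintro ⟨u, v, hu, hv, rfl⟩; exact ⟨u, v, ⟨hu, hv⟩, rfl⟩
  refine ⟨?_, ?_, ?_, ?_⟩
  · intro p hp
    obtain ⟨u, v, hu, hv, rfl⟩ := (hmemiff p).mp hp
    have := hA v; have := hB u
    constructor <;> simp <;> omega
  · -- column counts
    intro i hi
    rw [pat, Finset.filter_image]
    rw [Finset.card_image_of_injOn]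
    · have he : ((Finset.range (2*c) ×ˢ Finset.range (2*r)).filter
          (fun q => (2*q.1 + A q.2, 2*q.2 + B q.1).1 = i)) =
          {i / 2} ×ˢ ((Finset.range (2*r)).filter (fun v => A v = i % 2)) := by
        ext ⟨u, v⟩
        simp only [Finset.mem_filter, Finset.mem_product, Finset.mem_range,
          Finset.mem_singleton]
        have := hA v
        constructor <;> intro h <;> [skip; skip] <;> omega
      rw [he, Finset.card_product, Finset.card_singleton, one_mul]
      rcases Nat.mod_two_eq_zero_or_one i with h | h <;> rw [h]
      · exact hAcard0
      · exact hAcard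
    · rintro ⟨u, v⟩ h1 ⟨u', v'⟩ h2 he
      simp only [Finset.coe_filter, Set.mem_setOf_eq, Finset.mem_product,
        Finset.mem_range] at h1 h2
      simp only [Prod.mk.injEq] at he
      have := hA v; have := hA v'; have := hB u; have := hB u'
      have hu : u = u' := by omega
      subst hu
      have hv : v = v' := by omega
      simp [hv]
  · -- row counts
    intro j hj
    rw [pat, Finset.filter_image]
    rw [Finset.card_image_of_injOn]
    · have he : ((Finset.range (2*c) ×ˢ Finset.range (2*r)).filter
          (fun q => (2*q.1 + A q.2, 2*q.2 + B q.1).2 = j)) =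
          ((Finset.range (2*c)).filter (fun u => B u = j % 2)) ×ˢ {j / 2} := by
        ext ⟨u, v⟩
        simp only [Finset.mem_filter, Finset.mem_product, Finset.mem_range,
          Finset.mem_singleton]
        have := hB u
        constructor <;> intro h <;> [skip; skip] <;> omega
      rw [he, Finset.card_product, Finset.card_singleton, mul_one]
      rcases Nat.mod_two_eq_zero_or_one j with h | h <;> rw [h]
      · exact hBcard0
      · exact hBcard
    · rintro ⟨u, v⟩ h1 ⟨u', v'⟩ h2 he
      simp only [Finset.coe_filter, Set.mem_setOf_eq, Finset.mem_product,
        Finset.mem_range] at h1 h2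
      simp only [Prod.mk.injEq] at he
      have := hA v; have := hA v'; have := hB u; have := hB u'
      have hv : v = v' := by omega
      subst hv
      have hu : u = u' := by omega
      simp [hu]
  · -- non-attacking
    intro p hp q hq hadj
    obtain ⟨u, v, hu, hv, rfl⟩ := (hmemiff p).mp hp
    obtain ⟨u', v', hu', hv', rfl⟩ := (hmemiff q).mp hq
    obtain ⟨hne, h1, h2⟩ := hadj
    rw [Ne, Prod.mk.injEq, not_and_or] at hne
    have hAv := hA v; have hAv' := hA v'; have hBu := hB u; have hBu' := hB u'
    simp only at h1 h2
    have hud : u' = u ∨ u' = u + 1 ∨ u = u' + 1 := by omega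
    have hvd : v' = v ∨ v' = v + 1 ∨ v = v' + 1 := by omega
    rcases hud with rfl | rfl | rfl <;> rcases hvd with rfl | rfl | rfl
    · omega
    · omega
    · omega
    · omega
    · exact hD1 v u ⟨by omega, by omega, by omega, by omega⟩
    · exact hD2 v' u ⟨by omega, by omega, by omega, by omega⟩
    · omega
    · exact hD2 v u' ⟨by omega, by omega, by omega, by omega⟩
    · exact hD1 v' u' ⟨by omega, by omega, by omega, by omega⟩


lemma uniqueness {c r : ℕ} (hc : 0 < c) (hr : 0 < r) {T : Finset (ℕ × ℕ)}
    (hT : ValidConfig c r T)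
    (hcard1 : (pat c r (fun v => if v < r then 0 else 1)
        (fun u => if u < c then 1 else 0)).card = 4*c*r)
    (hcard2 : (pat c r (fun v => if v < r then 1 else 0)
        (fun u => if u < c then 0 else 1)).card = 4*c*r) :
    T = pat c r (fun v => if v < r then 0 else 1) (fun u => if u < c then 1 else 0) ∨
    T = pat c r (fun v => if v < r then 1 else 0) (fun u => if u < c then 0 else 1) := by
  obtain ⟨hbound, hcol, hrow, hatt⟩ := hT
  have hdupe : ∀ p ∈ T, ∀ q ∈ T, p.1 / 2 = q.1 / 2 → p.2 / 2 = q.2 / 2 → p = q := by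
    intro p hp q hq h1 h2
    by_contra hne
    exact hatt p hp q hq ⟨hne, by omega, by omega⟩
  have hcardT : T.card = 4*c*r := valid_card hbound hcol
  have hinj : Set.InjOn (fun p : ℕ × ℕ => (p.1/2, p.2/2)) T := by
    intro p hp q hq h
    simp only [Prod.mk.injEq] at h
    exact hdupe p hp q hq h.1 h.2
  have himsub : T.image (fun p => (p.1/2, p.2/2)) ⊆
      Finset.range (2*c) ×ˢ Finset.range (2*r) := by
    intro x hx
    obtain ⟨p, hp, rfl⟩ := Finset.mem_image.mp hx
    have := hbound p hp
    simp only [Finset.mem_product, Finset.mem_range]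
    omega
  have him : T.image (fun p => (p.1/2, p.2/2)) =
      Finset.range (2*c) ×ˢ Finset.range (2*r) := by
    apply Finset.eq_of_subset_of_card_le himsub
    rw [Finset.card_image_of_injOn hinj, hcardT, Finset.card_product,
      Finset.card_range, Finset.card_range]
    have : 2*c*(2*r) = 4*c*r := by ring
    omega
  have hex : ∀ u v : ℕ, ∃ p : ℕ × ℕ, u < 2*c → v < 2*r →
      p ∈ T ∧ p.1/2 = u ∧ p.2/2 = v := by
    intro u v
    by_cases h : u < 2*c ∧ v < 2*r
    · have hm : (u, v) ∈ T.image (fun p => (p.1/2, p.2/2)) := by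
        rw [him]
        simp only [Finset.mem_product, Finset.mem_range]
        exact h
      obtain ⟨p, hp, he⟩ := Finset.mem_image.mp hm
      simp only [Prod.mk.injEq] at he
      exact ⟨p, fun _ _ => ⟨hp, he.1, he.2⟩⟩
    · exact ⟨(0, 0), fun h1 h2 => absurd ⟨h1, h2⟩ h⟩
  choose P hP using hex
  -- column counts for blocks
  have hScard : ∀ u < 2*c,
      ((Finset.range (2*r)).filter (fun v => (P u v).1 % 2 = 1)).card = r := by
    intro u hu
    have key : ((Finset.range (2*r)).filter (fun v => (P u v).1 % 2 = 1)).card =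
        (T.filter (fun p => p.1 = 2*u+1)).card := by
      apply Finset.card_nbij (fun v => P u v)
      · intro v hv
        rw [Finset.mem_coe, Finset.mem_filter, Finset.mem_range] at hv
        obtain ⟨hm, h1, h2⟩ := hP u v hu hv.1
        simp only [Finset.coe_filter, Set.mem_setOf_eq]
        exact ⟨hm, by omega⟩
      · intro v hv v' hv' he
        simp only [Finset.coe_filter, Set.mem_setOf_eq, Finset.mem_range] at hv hv'
        have he' : P u v = P u v' := he
        have e1 := (hP u v hu hv.1).2.2
        have e2 := (hP u v' hu hv'.1).2.2
        rw [← e1, ← e2, he']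
      · intro q hq
        simp only [Finset.coe_filter, Set.mem_setOf_eq, Finset.mem_coe,
          Finset.mem_filter] at hq
        obtain ⟨hqT, hq1⟩ := hq
        have hbq := hbound q hqT
        have hv2 : q.2/2 < 2*r := by omega
        obtain ⟨hm, h1, h2⟩ := hP u (q.2/2) hu hv2
        have hPq : P u (q.2/2) = q := hdupe _ hm _ hqT (by omega) (by omega)
        refine ⟨q.2/2, ?_, hPq⟩
        simp only [Finset.coe_filter, Set.mem_setOf_eq, Finset.mem_range]
        exact ⟨hv2, by rw [hPq]; omega⟩
    rw [key]
    exact hcol (2*u+1) (by omega)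
  -- row counts for blocks
  have hRcard : ∀ v < 2*r,
      ((Finset.range (2*c)).filter (fun u => (P u v).2 % 2 = 1)).card = c := by
    intro v hv
    have key : ((Finset.range (2*c)).filter (fun u => (P u v).2 % 2 = 1)).card =
        (T.filter (fun p => p.2 = 2*v+1)).card := by
      apply Finset.card_nbij (fun u => P u v)
      · intro u hu
        rw [Finset.mem_coe, Finset.mem_filter, Finset.mem_range] at hu
        obtain ⟨hm, h1, h2⟩ := hP u v hu.1 hv
        simp only [Finset.coe_filter, Set.mem_setOf_eq]
        exact ⟨hm, by omega⟩
      · intro u hu u' hu' he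
        simp only [Finset.coe_filter, Set.mem_setOf_eq, Finset.mem_range] at hu hu'
        have he' : P u v = P u' v := he
        have e1 := (hP u v hu.1 hv).2.1
        have e2 := (hP u' v hu'.1 hv).2.1
        rw [← e1, ← e2, he']
      · intro q hq
        simp only [Finset.coe_filter, Set.mem_setOf_eq, Finset.mem_coe,
          Finset.mem_filter] at hq
        obtain ⟨hqT, hq1⟩ := hq
        have hbq := hbound q hqT
        have hu2 : q.1/2 < 2*c := by omega
        obtain ⟨hm, h1, h2⟩ := hP (q.1/2) v hu2 hv
        have hPq : P (q.1/2) v = q := hdupe _ hm _ hqT (by omega) (by omega)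
        refine ⟨q.1/2, ?_, hPq⟩
        simp only [Finset.coe_filter, Set.mem_setOf_eq, Finset.mem_range]
        exact ⟨hu2, by rw [hPq]; omega⟩
    rw [key]
    exact hrow (2*v+1) (by omega)
  -- adjacency helper
  have hadj : ∀ p ∈ T, ∀ q ∈ T,
      ((p.1 : ℤ) - q.1).natAbs ≤ 1 → ((p.2 : ℤ) - q.2).natAbs ≤ 1 → p = q := by
    intro p hp q hq h1 h2
    by_contra hne
    exact hatt p hp q hq ⟨hne, h1, h2⟩
  -- the column offset is constant along block rows
  have hstepA : ∀ u, u + 1 < 2*c → ∀ v < 2*r, (P (u+1) v).1 % 2 = (P u v).1 % 2 := by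
    intro u hu
    have hsub : ((Finset.range (2*r)).filter (fun v => (P u v).1 % 2 = 1)) ⊆
        ((Finset.range (2*r)).filter (fun v => (P (u+1) v).1 % 2 = 1)) := by
      intro v hv
      rw [Finset.mem_filter, Finset.mem_range] at hv ⊢
      obtain ⟨hv2r, hv1⟩ := hv
      refine ⟨hv2r, ?_⟩
      obtain ⟨hm, h1, h2⟩ := hP u v (by omega) hv2r
      obtain ⟨hm', h1', h2'⟩ := hP (u+1) v hu hv2r
      by_contra hcon
      have heq := hadj _ hm _ hm' (by omega) (by omega)
      have := congrArg Prod.fst heq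
      omega
    have heqS := Finset.eq_of_subset_of_card_le hsub
      (by rw [hScard (u+1) hu, hScard u (by omega)])
    intro v hv
    have hiff : ((P u v).1 % 2 = 1) ↔ ((P (u+1) v).1 % 2 = 1) := by
      constructor <;> intro h
      · have hmem : v ∈ (Finset.range (2*r)).filter (fun v => (P u v).1 % 2 = 1) :=
          Finset.mem_filter.mpr ⟨Finset.mem_range.mpr hv, h⟩
        rw [heqS] at hmem
        exact (Finset.mem_filter.mp hmem).2
      · have hmem : v ∈ (Finset.range (2*r)).filter (fun v => (P (u+1) v).1 % 2 = 1) :=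
          Finset.mem_filter.mpr ⟨Finset.mem_range.mpr hv, h⟩
        rw [← heqS] at hmem
        exact (Finset.mem_filter.mp hmem).2
    omega
  have haA : ∀ u < 2*c, ∀ v < 2*r, (P u v).1 % 2 = (P 0 v).1 % 2 := by
    intro u
    induction u with
    | zero => intro _ v hv; rfl
    | succ u ih => intro hu v hv; rw [hstepA u hu v hv, ih (by omega) v hv]
  -- the row offset is constant along block columns
  have hstepB : ∀ v, v + 1 < 2*r → ∀ u < 2*c, (P u (v+1)).2 % 2 = (P u v).2 % 2 := by
    intro v hv
    have hsub : ((Finset.range (2*c)).filter (fun u => (P u v).2 % 2 = 1)) ⊆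
        ((Finset.range (2*c)).filter (fun u => (P u (v+1)).2 % 2 = 1)) := by
      intro u hu
      rw [Finset.mem_filter, Finset.mem_range] at hu ⊢
      obtain ⟨hu2c, hu1⟩ := hu
      refine ⟨hu2c, ?_⟩
      obtain ⟨hm, h1, h2⟩ := hP u v hu2c (by omega)
      obtain ⟨hm', h1', h2'⟩ := hP u (v+1) hu2c hv
      by_contra hcon
      have heq := hadj _ hm _ hm' (by omega) (by omega)
      have := congrArg Prod.snd heq
      omega
    have heqS := Finset.eq_of_subset_of_card_le hsub
      (by rw [hRcard (v+1) hv, hRcard v (by omega)])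
    intro u hu
    have hiff : ((P u v).2 % 2 = 1) ↔ ((P u (v+1)).2 % 2 = 1) := by
      constructor <;> intro h
      · have hmem : u ∈ (Finset.range (2*c)).filter (fun u => (P u v).2 % 2 = 1) :=
          Finset.mem_filter.mpr ⟨Finset.mem_range.mpr hu, h⟩
        rw [heqS] at hmem
        exact (Finset.mem_filter.mp hmem).2
      · have hmem : u ∈ (Finset.range (2*c)).filter (fun u => (P u (v+1)).2 % 2 = 1) :=
          Finset.mem_filter.mpr ⟨Finset.mem_range.mpr hu, h⟩
        rw [← heqS] at hmem
        exact (Finset.mem_filter.mp hmem).2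
    omega
  have hbB : ∀ u < 2*c, ∀ v < 2*r, (P u v).2 % 2 = (P u 0).2 % 2 := by
    intro u hu v
    induction v with
    | zero => intro _; rfl
    | succ v ih => intro hv; rw [hstepB v hv u hu, ih (by omega)]
  -- the offset functions
  set A : ℕ → ℕ := fun v => (P 0 v).1 % 2 with hAdef
  set B : ℕ → ℕ := fun u => (P u 0).2 % 2 with hBdef
  have hAle : ∀ v, A v ≤ 1 := fun v => by simp only [hAdef]; omega
  have hBle : ∀ u, B u ≤ 1 := fun u => by simp only [hBdef]; omega
  have hPform : ∀ u < 2*c, ∀ v < 2*r, P u v = (2*u + A v, 2*v + B u) := by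
    intro u hu v hv
    obtain ⟨hm, h1, h2⟩ := hP u v hu hv
    have e1 := haA u hu v hv
    have e2 := hbB u hu v hv
    rw [Prod.ext_iff]
    constructor <;> simp only [hAdef, hBdef] <;> omega
  have hAcard : ((Finset.range (2*r)).filter (fun v => A v = 1)).card = r :=
    hScard 0 (by omega)
  have hBcard : ((Finset.range (2*c)).filter (fun u => B u = 1)).card = c := by
    have key : ((Finset.range (2*c)).filter (fun u => B u = 1)) =
        ((Finset.range (2*c)).filter (fun u => (P u 0).2 % 2 = 1)) := by
      apply Finset.filter_congr
      intro u hu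
      simp only [hBdef]
    rw [key]
    exact hRcard 0 (by omega)
  -- diagonal constraints
  have hD1 : ∀ v u, v + 1 < 2*r → u + 1 < 2*c →
      ¬ (A v = 1 ∧ A (v+1) = 0 ∧ B u = 1 ∧ B (u+1) = 0) := by
    rintro v u hv hu ⟨ha, ha', hb, hb'⟩
    have hp := hPform u (by omega) v (by omega)
    have hq := hPform (u+1) hu (v+1) hv
    rw [ha, hb] at hp
    rw [ha', hb'] at hq
    have hm := (hP u v (by omega) (by omega)).1
    have hm' := (hP (u+1) (v+1) hu hv).1
    have heq := hadj _ hm _ hm' (by rw [hp, hq]; push_cast; omega)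
      (by rw [hp, hq]; push_cast; omega)
    rw [hp, hq] at heq
    simp only [Prod.mk.injEq] at heq
    omega
  have hD2 : ∀ v u, v + 1 < 2*r → u + 1 < 2*c →
      ¬ (A (v+1) = 1 ∧ A v = 0 ∧ B (u+1) = 1 ∧ B u = 0) := by
    rintro v u hv hu ⟨ha, ha', hb, hb'⟩
    have hp := hPform u (by omega) (v+1) hv
    have hq := hPform (u+1) hu v (by omega)
    rw [ha, hb'] at hp
    rw [ha', hb] at hq
    have hm := (hP u (v+1) (by omega) hv).1
    have hm' := (hP (u+1) v hu (by omega)).1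
    have heq := hadj _ hm _ hm' (by rw [hp, hq]; push_cast; omega)
      (by rw [hp, hq]; push_cast; omega)
    rw [hp, hq] at heq
    simp only [Prod.mk.injEq] at heq
    omega
  -- case analysis on whether A has a descent
  by_cases hdesc : ∃ v, v + 1 < 2*r ∧ A v = 1 ∧ A (v+1) = 0
  · -- A has a descent: second configuration
    right
    obtain ⟨v₀, hv₀, hd1, hd2⟩ := hdesc
    have hBmono : ∀ u, u + 1 < 2*c → B u = 1 → B (u+1) = 1 := by
      intro u hu h1
      by_contra hcon
      have := hBle (u+1)
      exact hD1 v₀ u hv₀ hu ⟨hd1, hd2, h1, by omega⟩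
    have hBstep : ∀ u < 2*c, B u = if u < c then 0 else 1 :=
      stepFun B (fun u _ => hBle u) hBcard hBmono
    have hbc1 : B (c-1) = 0 := by
      have := hBstep (c-1) (by omega); simpa [Nat.sub_lt hc] using this
    have hbc2 : B c = 1 := by
      have := hBstep c (by omega); simpa using this
    have hAnoasc : ∀ v, v + 1 < 2*r → ¬ (A v = 0 ∧ A (v+1) = 1) := by
      rintro v hv ⟨h0, h1⟩
      have hcc : c - 1 + 1 = c := by omega
      apply hD2 v (c-1) hv (by omega)
      rw [hcc]
      exact ⟨h1, h0, hbc2, hbc1⟩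
    have hA'mono : ∀ v, v + 1 < 2*r → (1 - A v) = 1 → (1 - A (v+1)) = 1 := by
      intro v hv h1
      have h0 : A v = 0 := by have := hAle v; omega
      have := hAnoasc v hv
      have := hAle (v+1)
      omega
    have hA'card : ((Finset.range (2*r)).filter (fun v => 1 - A v = 1)).card = r := by
      have he : ((Finset.range (2*r)).filter (fun v => 1 - A v = 1)) =
          ((Finset.range (2*r)).filter (fun v => A v = 0)) := by
        apply Finset.filter_congr
        intro v _
        have := hAle v
        constructor <;> intro <;> omega
      rw [he]
      exact filter_one_card (fun v _ => hAle v) hAcard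
    have hA'step := stepFun (fun v => 1 - A v)
      (fun v _ => by show 1 - A v ≤ 1; omega) hA'card hA'mono
    have hAstep : ∀ v < 2*r, A v = if v < r then 1 else 0 := by
      intro v hv
      have h1 : 1 - A v = if v < r then 0 else 1 := hA'step v hv
      have h2 := hAle v
      split at h1 <;> split <;> omega
    -- T equals the second pattern
    apply Finset.eq_of_subset_of_card_le _ (le_of_eq (by rw [hcard2, hcardT]))
    intro p hp
    have hbp := hbound p hp
    have hu : p.1/2 < 2*c := by omega
    have hv : p.2/2 < 2*r := by omega
    have hm := hP (p.1/2) (p.2/2) hu hv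
    have hpeq : p = P (p.1/2) (p.2/2) := hdupe p hp _ hm.1 (by omega) (by omega)
    rw [hpeq, hPform _ hu _ hv]
    simp only [pat, Finset.mem_image, Finset.mem_product, Finset.mem_range, Prod.exists]
    exact ⟨p.1/2, p.2/2, ⟨hu, hv⟩, by rw [hAstep _ hv, hBstep _ hu]⟩
  · -- A has no descent: first configuration
    left
    push_neg at hdesc
    have hAmono : ∀ v, v + 1 < 2*r → A v = 1 → A (v+1) = 1 := by
      intro v hv h1
      have := hdesc v hv h1
      have := hAle (v+1)
      omega
    have hAstep : ∀ v < 2*r, A v = if v < r then 0 else 1 :=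
      stepFun A (fun v _ => hAle v) hAcard hAmono
    have har1 : A (r-1) = 0 := by
      have := hAstep (r-1) (by omega); simpa [Nat.sub_lt hr] using this
    have har2 : A r = 1 := by
      have := hAstep r (by omega); simpa using this
    have hBnoasc : ∀ u, u + 1 < 2*c → ¬ (B u = 0 ∧ B (u+1) = 1) := by
      rintro u hu ⟨h0, h1⟩
      have hrr : r - 1 + 1 = r := by omega
      apply hD2 (r-1) u (by omega) hu
      rw [hrr]
      exact ⟨har2, har1, h1, h0⟩
    have hB'mono : ∀ u, u + 1 < 2*c → (1 - B u) = 1 → (1 - B (u+1)) = 1 := by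
      intro u hu h1
      have h0 : B u = 0 := by have := hBle u; omega
      have := hBnoasc u hu
      have := hBle (u+1)
      omega
    have hB'card : ((Finset.range (2*c)).filter (fun u => 1 - B u = 1)).card = c := by
      have he : ((Finset.range (2*c)).filter (fun u => 1 - B u = 1)) =
          ((Finset.range (2*c)).filter (fun u => B u = 0)) := by
        apply Finset.filter_congr
        intro u _
        have := hBle u
        constructor <;> intro <;> omega
      rw [he]
      exact filter_one_card (fun u _ => hBle u) hBcard
    have hB'step := stepFun (fun u => 1 - B u)
      (fun u _ => by show 1 - B u ≤ 1; omega) hB'card hB'mono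
    have hBstep : ∀ u < 2*c, B u = if u < c then 1 else 0 := by
      intro u hu
      have h1 : 1 - B u = if u < c then 0 else 1 := hB'step u hu
      have h2 := hBle u
      split at h1 <;> split <;> omega
    apply Finset.eq_of_subset_of_card_le _ (le_of_eq (by rw [hcard1, hcardT]))
    intro p hp
    have hbp := hbound p hp
    have hu : p.1/2 < 2*c := by omega
    have hv : p.2/2 < 2*r := by omega
    have hm := hP (p.1/2) (p.2/2) hu hv
    have hpeq : p = P (p.1/2) (p.2/2) := hdupe p hp _ hm.1 (by omega) (by omega)
    rw [hpeq, hPform _ hu _ hv]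
    simp only [pat, Finset.mem_image, Finset.mem_product, Finset.mem_range, Prod.exists]
    exact ⟨p.1/2, p.2/2, ⟨hu, hv⟩, by rw [hAstep _ hv, hBstep _ hu]⟩

lemma step_card_asc (m : ℕ) :
    ((Finset.range (2*m)).filter (fun v => (if v < m then 0 else 1) = 1)).card = m := by
  have he : ((Finset.range (2*m)).filter (fun v => (if v < m then 0 else 1) = 1)) =
      Finset.Ico m (2*m) := by
    ext v
    rw [Finset.mem_filter, Finset.mem_range, Finset.mem_Ico]
    constructor
    · rintro ⟨h1, h2⟩; split at h2 <;> omega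
    · intro h; refine ⟨h.2, ?_⟩; rw [if_neg (by omega)]
  rw [he, Nat.card_Ico]
  omega

lemma step_card_desc (m : ℕ) :
    ((Finset.range (2*m)).filter (fun v => (if v < m then 1 else 0) = 1)).card = m := by
  have he : ((Finset.range (2*m)).filter (fun v => (if v < m then 1 else 0) = 1)) =
      Finset.range m := by
    ext v
    rw [Finset.mem_filter, Finset.mem_range, Finset.mem_range]
    constructor
    · rintro ⟨h1, h2⟩; split at h2 <;> omega
    · intro h; refine ⟨by omega, ?_⟩; rw [if_pos h]
  rw [he, Finset.card_range]

lemma valid1 {c r : ℕ} (hc : 0 < c) (hr : 0 < r) :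
    ValidConfig c r (pat c r (fun v => if v < r then 0 else 1)
      (fun u => if u < c then 1 else 0)) := by
  apply valid_pat c r hc hr
  · intro v; split <;> omega
  · intro u; split <;> omega
  · exact step_card_asc r
  · exact step_card_desc c
  · rintro v u ⟨h1, h2, h3, h4⟩
    split at h1 <;> split at h2 <;> omega
  · rintro v u ⟨h1, h2, h3, h4⟩
    split at h3 <;> split at h4 <;> omega

lemma valid2 {c r : ℕ} (hc : 0 < c) (hr : 0 < r) :
    ValidConfig c r (pat c r (fun v => if v < r then 1 else 0)
      (fun u => if u < c then 0 else 1)) := by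
  apply valid_pat c r hc hr
  · intro v; split <;> omega
  · intro u; split <;> omega
  · exact step_card_desc r
  · exact step_card_asc c
  · rintro v u ⟨h1, h2, h3, h4⟩
    split at h3 <;> split at h4 <;> omega
  · rintro v u ⟨h1, h2, h3, h4⟩
    split at h1 <;> split at h2 <;> omega

end ParksAux

/-- For all positive integers c and r, there are exactly 2 non-attacking
configurations on the 4c×4r grid with exactly c trees per column and r per row. -/
theorem stmt_6 (c r : ℕ) (hc : 0 < c) (hr : 0 < r) :
    ∃ T₁ T₂ : Finset (ℕ × ℕ), T₁ ≠ T₂ ∧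
      ∀ T : Finset (ℕ × ℕ), ValidConfig c r T ↔ (T = T₁ ∨ T = T₂) := by
  refine ⟨ParksAux.pat c r (fun v => if v < r then 0 else 1)
      (fun u => if u < c then 1 else 0),
    ParksAux.pat c r (fun v => if v < r then 1 else 0)
      (fun u => if u < c then 0 else 1), ?_, ?_⟩
  · intro h
    have hmem : (0, 1) ∈ ParksAux.pat c r (fun v => if v < r then 0 else 1)
        (fun u => if u < c then 1 else 0) := by
      simp only [ParksAux.pat, Finset.mem_image, Finset.mem_product, Finset.mem_range,
        Prod.exists]
      exact ⟨0, 0, ⟨by omega, by omega⟩, by rw [if_pos hr, if_pos hc]⟩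
    rw [h] at hmem
    simp only [ParksAux.pat, Finset.mem_image, Finset.mem_product, Finset.mem_range,
      Prod.exists] at hmem
    obtain ⟨u, v, ⟨hu, hv⟩, heq⟩ := hmem
    rw [Prod.mk.injEq] at heq
    obtain ⟨h1, h2⟩ := heq
    split at h1 <;> split at h2 <;> omega
  · intro T
    constructor
    · intro hT
      have h1 := ParksAux.valid1 hc hr
      have h2 := ParksAux.valid2 hc hr
      exact ParksAux.uniqueness hc hr hT
        (ParksAux.valid_card h1.1 h1.2.1) (ParksAux.valid_card h2.1 h2.2.1)
    · rintro (rfl | rfl)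
      · exact ParksAux.valid1 hc hr
      · exact ParksAux.valid2 hc hr
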